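/- Let N and r be positive integers, let B_1, …, B_r be points of ℝ^N with rational coordinates, let L be the convex hull of {B_1, …, B_r}, let m be a positive integer, and let c > 0 be a real number. Let T be a set of linear functionals ℓ : ℝ^N → ℝ such that for every ℓ ∈ T and every j one has ℓ(B_j) ∈ (1/m)ℤ and ℓ(B_j) ≥ −c. Then the set N_T := { Δ ∈ L : ℓ(Δ) ≥ 0 for all ℓ ∈ T } is a rational polytope, i.e., it is the convex hull of finitely many points of ℝ^N with rational coordinates. -/

import Mathlib

/-- From a partially well-ordered set, extract a finite "basis": a finite subset such that
every element of the set dominates some basis element. -/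
lemma exists_finite_basis {α : Type*} [Preorder α] (s : Set α) (hs : s.IsPWO) :
    ∃ F : Finset α, ↑F ⊆ s ∧ ∀ x ∈ s, ∃ y ∈ F, y ≤ x := by
  by_contra hcon
  push_neg at hcon
  -- for every finite subset of `s` there is an element of `s` not above any of it
  have key : ∀ F : Finset α, ↑F ⊆ s → ∃ x ∈ s, ∀ y ∈ F, ¬ y ≤ x := by
    intro F hF
    rcases hcon F hF with ⟨x, hx, hxy⟩
    exact ⟨x, hx, fun y hy hle => hxy y hy hle⟩
  classical
  -- build a bad sequence
  let pick : {F : Finset α // ↑F ⊆ s} → α := fun F => (key F.1 F.2).choose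
  have pick_mem : ∀ F, pick F ∈ s := fun F => (key F.1 F.2).choose_spec.1
  have pick_not : ∀ F, ∀ y ∈ F.1, ¬ y ≤ pick F :=
    fun F => (key F.1 F.2).choose_spec.2
  let seq : ℕ → {F : Finset α // ↑F ⊆ s} := fun n =>
    Nat.rec ⟨(∅ : Finset α), by simp⟩
      (fun _ F => ⟨insert (pick F) F.1, by
        intro x hx
        simp only [Finset.coe_insert, Set.mem_insert_iff] at hx
        rcases hx with rfl | hx
        · exact pick_mem F
        · exact F.2 hx⟩) n
  have seq_succ : ∀ n, (seq (n+1)).1 = insert (pick (seq n)) (seq n).1 := fun n => rfl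
  let f : ℕ → α := fun n => pick (seq n)
  have hmono : ∀ m n, m ≤ n → (seq m).1 ⊆ (seq n).1 := by
    intro m n hmn
    induction n with
    | zero => simp_all
    | succ k ih =>
      rcases Nat.lt_or_ge m (k+1) with h | h
      · refine (ih (Nat.lt_succ_iff.mp h)).trans ?_
        rw [seq_succ]; exact Finset.subset_insert _ _
      · have : m = k + 1 := le_antisymm hmn h
        subst this; rfl
  have hfmem : ∀ m n, m < n → f m ∈ (seq n).1 := by
    intro m n hmn
    have : f m ∈ (seq (m+1)).1 := by rw [seq_succ]; exact Finset.mem_insert_self _ _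
    exact hmono (m+1) n hmn this
  rcases hs.exists_lt (f := f) (fun n => pick_mem (seq n)) with ⟨m, n, hmn, hle⟩
  exact pick_not (seq n) (f m) (hfmem m n hmn) hle


variable {E : Type*} [AddCommGroup E] [Module ℝ E]

lemma halfspace_cut (Q : E → Prop)
    (hQ : ∀ (x y : E) (t : ℚ), Q x → Q y → Q ((t : ℝ) • x + (1 - (t : ℝ)) • y))
    (F : Finset E) (hF : ∀ f ∈ F, Q f)
    (ℓ : E →ₗ[ℝ] ℝ) (hℓ : ∀ f ∈ F, ∃ q : ℚ, ℓ f = q) :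
    ∃ G : Finset E, (∀ g ∈ G, Q g) ∧
      {x | x ∈ convexHull ℝ (F : Set E) ∧ 0 ≤ ℓ x} = convexHull ℝ (G : Set E) := by
  classical
  set P : Finset E := F.filter (fun y => 0 ≤ ℓ y) with hP
  set Ng : Finset E := F.filter (fun y => ¬ 0 ≤ ℓ y) with hNg
  have hPF : P ⊆ F := Finset.filter_subset _ _
  have hNgF : Ng ⊆ F := Finset.filter_subset _ _
  have hPpos : ∀ f ∈ P, 0 ≤ ℓ f := fun f hf => (Finset.mem_filter.1 hf).2
  have hNgneg : ∀ g ∈ Ng, ℓ g < 0 := fun g hg => not_le.1 (Finset.mem_filter.1 hg).2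
  set cpt : E × E → E := fun p =>
    ((-ℓ p.2) / (ℓ p.1 - ℓ p.2)) • p.1 + ((ℓ p.1) / (ℓ p.1 - ℓ p.2)) • p.2 with hcpt
  set G : Finset E := P ∪ (P ×ˢ Ng).image cpt with hG
  have hdpos : ∀ f ∈ P, ∀ g ∈ Ng, 0 < ℓ f - ℓ g := by
    intro f hf g hg
    have := hPpos f hf; have := hNgneg g hg; linarith
  refine ⟨G, ?_, ?_⟩
  · -- Q holds on G
    intro g hg
    rw [hG, Finset.mem_union] at hg
    rcases hg with hg | hg
    · exact hF g (hPF hg)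
    · rcases Finset.mem_image.1 hg with ⟨⟨f, g'⟩, hfg, rfl⟩
      rcases Finset.mem_product.1 hfg with ⟨hf, hg'⟩
      rcases hℓ f (hPF hf) with ⟨q₁, hq₁⟩
      rcases hℓ g' (hNgF hg') with ⟨q₂, hq₂⟩
      have hd : 0 < ℓ f - ℓ g' := hdpos f hf g' hg'
      have hd' : ℓ f - ℓ g' ≠ 0 := ne_of_gt hd
      have hqd : (q₁ : ℝ) - (q₂ : ℝ) ≠ 0 := by rw [← hq₁, ← hq₂]; linarith
      have hqd' : q₁ - q₂ ≠ 0 := by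
        intro h; apply hqd; exact_mod_cast congrArg (fun x : ℚ => (x : ℝ)) h
      have key := hQ f g' ((-q₂) / (q₁ - q₂)) (hF f (hPF hf)) (hF g' (hNgF hg'))
      have e1 : (((-q₂) / (q₁ - q₂) : ℚ) : ℝ) = (-ℓ g') / (ℓ f - ℓ g') := by
        rw [hq₁, hq₂]; push_cast; ring
      have e2 : (1 : ℝ) - (-ℓ g') / (ℓ f - ℓ g') = (ℓ f) / (ℓ f - ℓ g') := by
        field_simp; ring
      rw [e1, e2] at key
      exact key
  · -- the set equality
    apply Set.Subset.antisymm
    · -- hard direction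
      rintro x ⟨hxF, hxl⟩
      rw [Finset.mem_convexHull'] at hxF
      obtain ⟨w, hw0, hw1, hwx⟩ := hxF
      set A : ℝ := ∑ y ∈ P, w y * ℓ y with hA
      set Bv : ℝ := ∑ y ∈ Ng, w y * (-ℓ y) with hBv
      have hsplitw : ∑ y ∈ P, w y + ∑ y ∈ Ng, w y = 1 := by
        rw [hP, hNg, Finset.sum_filter_add_sum_filter_not, hw1]
      have hnn : ∀ y ∈ Ng, 0 ≤ w y * (-ℓ y) := fun y hy =>
        mul_nonneg (hw0 y (hNgF hy)) (by have := hNgneg y hy; linarith)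
      have hlx : ℓ x = A - Bv := by
        rw [← hwx, map_sum]
        simp only [map_smul, smul_eq_mul]
        rw [← Finset.sum_filter_add_sum_filter_not F (fun y => 0 ≤ ℓ y) (fun y => w y * ℓ y)]
        rw [hA, hBv]
        have : ∑ y ∈ Ng, w y * (-ℓ y) = -∑ y ∈ Ng, w y * ℓ y := by
          rw [← Finset.sum_neg_distrib]; exact Finset.sum_congr rfl (fun y _ => by ring)
        rw [this]; ring
      have hA0 : 0 ≤ A := Finset.sum_nonneg fun y hy =>
        mul_nonneg (hw0 y (hPF hy)) (hPpos y hy)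
      have hB0 : 0 ≤ Bv := Finset.sum_nonneg hnn
      have hBA : Bv ≤ A := by rw [hlx] at hxl; linarith
      rcases eq_or_lt_of_le hA0 with hA0' | hApos
      · -- A = 0 : all negative-part weights vanish
        have hBv0 : Bv = 0 := le_antisymm (by linarith) hB0
        have hwz : ∀ y ∈ Ng, w y * (-ℓ y) = 0 :=
          (Finset.sum_eq_zero_iff_of_nonneg hnn).1 hBv0
        have hwz' : ∀ y ∈ Ng, w y = 0 := by
          intro y hy
          have h := hwz y hy
          have := hNgneg y hy
          rcases mul_eq_zero.1 h with h' | h'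
          · exact h'
          · exfalso; linarith
        have hx' : x = ∑ y ∈ P, w y • y := by
          rw [← hwx, ← Finset.sum_filter_add_sum_filter_not F (fun y => 0 ≤ ℓ y)
            (fun y => w y • y)]
          have : ∑ y ∈ Ng, w y • y = 0 :=
            Finset.sum_eq_zero fun y hy => by rw [hwz' y hy, zero_smul]
          rw [← hP, ← hNg, this, add_zero]
        have hwP1 : ∑ y ∈ P, w y = 1 := by
          have : ∑ y ∈ Ng, w y = 0 := Finset.sum_eq_zero hwz'
          rw [this, add_zero] at hsplitw; exact hsplitw
        have : x ∈ convexHull ℝ (P : Set E) := by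
          rw [Finset.mem_convexHull']
          exact ⟨w, fun y hy => hw0 y (hPF hy), hwP1, hx'.symm⟩
        refine convexHull_mono ?_ this
        rw [hG]; exact_mod_cast Finset.subset_union_left
      · -- A > 0 : the transportation construction
        have hAne : A ≠ 0 := ne_of_gt hApos
        set t : Finset (E ⊕ E × E) := P.disjSum (P ×ˢ Ng) with ht
        set w' : E ⊕ E × E → ℝ := Sum.elim (fun f => w f * ((A - Bv) / A))
          (fun p => (w p.1 * w p.2) * ((ℓ p.1 - ℓ p.2) / A)) with hw'
        set z : E ⊕ E × E → E := Sum.elim id cpt with hz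
        have hw'0 : ∀ i ∈ t, 0 ≤ w' i := by
          rintro (f | ⟨f, g⟩) hi
          · rw [ht, Finset.inl_mem_disjSum] at hi
            simp only [hw', Sum.elim_inl]
            have := hw0 f (hPF hi)
            have hAB : 0 ≤ (A - Bv) / A := div_nonneg (by linarith) (le_of_lt hApos)
            positivity
          · rw [ht, Finset.inr_mem_disjSum, Finset.mem_product] at hi
            obtain ⟨hf, hg⟩ := hi
            simp only [hw', Sum.elim_inr]
            have h1 := hw0 f (hPF hf)
            have h2 := hw0 g (hNgF hg)
            have h3 := hdpos f hf g hg
            have : 0 ≤ (ℓ f - ℓ g) / A := div_nonneg (le_of_lt h3) (le_of_lt hApos)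
            positivity
        have hzG : ∀ i ∈ t, z i ∈ (G : Set E) := by
          rintro (f | ⟨f, g⟩) hi
          · rw [ht, Finset.inl_mem_disjSum] at hi
            simp only [hz, Sum.elim_inl, id_eq, Finset.mem_coe]
            rw [hG]; exact Finset.mem_union_left _ hi
          · rw [ht, Finset.inr_mem_disjSum] at hi
            simp only [hz, Sum.elim_inr, Finset.mem_coe]
            rw [hG]; exact Finset.mem_union_right _ (Finset.mem_image_of_mem cpt hi)
        have hWsum : ∑ i ∈ t, w' i = 1 := by
          rw [ht, hw', Finset.sum_sumElim, Finset.sum_product]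
          have inner : ∀ f ∈ P, ∑ g ∈ Ng, (w f * w g) * ((ℓ f - ℓ g) / A)
              = (w f * ℓ f) * ((∑ g ∈ Ng, w g) / A) + w f * (Bv / A) := by
            intro f hf
            have e : ∀ g ∈ Ng, (w f * w g) * ((ℓ f - ℓ g) / A)
                = (w f * ℓ f) * (w g / A) + w f * ((w g * (-ℓ g)) / A) := fun g hg => by ring
            rw [Finset.sum_congr rfl e, Finset.sum_add_distrib]
            congr 1
            · rw [← Finset.mul_sum, ← Finset.sum_div]
            · rw [← Finset.mul_sum, ← Finset.sum_div, ← hBv]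
          rw [Finset.sum_congr rfl inner, Finset.sum_add_distrib, ← Finset.sum_mul,
            ← Finset.sum_mul, ← Finset.sum_mul, ← hA]
          field_simp
          linear_combination A * hsplitw
        have hVec : ∑ i ∈ t, w' i • z i = x := by
          rw [ht, Finset.sum_disjSum]
          simp only [hw', hz, Sum.elim_inl, Sum.elim_inr, id_eq]
          rw [Finset.sum_product]
          have inner : ∀ f ∈ P, ∑ g ∈ Ng, ((w f * w g) * ((ℓ f - ℓ g) / A)) • cpt (f, g)
              = (w f * (Bv / A)) • f + ((w f * ℓ f) / A) • (∑ g ∈ Ng, w g • g) := by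
            intro f hf
            have e : ∀ g ∈ Ng, ((w f * w g) * ((ℓ f - ℓ g) / A)) • cpt (f, g)
                = (w f * ((w g * (-ℓ g)) / A)) • f + (((w f * ℓ f) / A) * w g) • g := by
              intro g hg
              have hd : ℓ f - ℓ g ≠ 0 := ne_of_gt (hdpos f hf g hg)
              simp only [hcpt]
              rw [smul_add, smul_smul, smul_smul]
              congr 1
              · congr 1; field_simp
              · congr 1; field_simp
            rw [Finset.sum_congr rfl e, Finset.sum_add_distrib]
            congr 1
            · rw [← Finset.sum_smul]
              congr 1
              rw [← Finset.mul_sum, ← Finset.sum_div, ← hBv]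
            · rw [Finset.smul_sum]
              exact Finset.sum_congr rfl fun g hg => (smul_smul _ _ _).symm
          rw [Finset.sum_congr rfl inner, Finset.sum_add_distrib, ← Finset.sum_smul,
            ← Finset.sum_div, ← hA]
          have hAA : A / A = 1 := div_self hAne
          rw [hAA, one_smul]
          have hcomb : ∑ f ∈ P, (w f * ((A - Bv) / A)) • f + ∑ f ∈ P, (w f * (Bv / A)) • f
              = ∑ f ∈ P, w f • f := by
            rw [← Finset.sum_add_distrib]
            apply Finset.sum_congr rfl
            intro f hf
            rw [← add_smul]
            congr 1
            field_simp
            ring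
          rw [← add_assoc, hcomb]
          rw [← hwx, ← Finset.sum_filter_add_sum_filter_not F (fun y => 0 ≤ ℓ y)
            (fun y => w y • y), ← hP, ← hNg]
        have hmem := Finset.centerMass_mem_convexHull t hw'0
          (by rw [hWsum]; norm_num) hzG
        rwa [Finset.centerMass_eq_of_sum_1 _ _ hWsum, hVec] at hmem
    · -- easy direction
      apply convexHull_min
      · intro g hg
        rw [Finset.mem_coe, hG, Finset.mem_union] at hg
        rcases hg with hg | hg
        · exact ⟨subset_convexHull ℝ (F : Set E) (hPF hg), hPpos g hg⟩
        · rcases Finset.mem_image.1 hg with ⟨⟨f, g'⟩, hfg, rfl⟩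
          rcases Finset.mem_product.1 hfg with ⟨hf, hg'⟩
          have hd : 0 < ℓ f - ℓ g' := hdpos f hf g' hg'
          have hd' : ℓ f - ℓ g' ≠ 0 := ne_of_gt hd
          have ha : 0 ≤ (-ℓ g') / (ℓ f - ℓ g') :=
            div_nonneg (by have := hNgneg g' hg'; linarith) (le_of_lt hd)
          have hb : 0 ≤ (ℓ f) / (ℓ f - ℓ g') := div_nonneg (hPpos f hf) (le_of_lt hd)
          have hab : (-ℓ g') / (ℓ f - ℓ g') + (ℓ f) / (ℓ f - ℓ g') = 1 := by
            field_simp; ring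
          constructor
          · exact (convex_convexHull ℝ (F : Set E))
              (subset_convexHull ℝ (F : Set E) (hPF hf))
              (subset_convexHull ℝ (F : Set E) (hNgF hg')) ha hb hab
          · have : ℓ (cpt (f, g')) = 0 := by
              simp only [hcpt]
              rw [map_add, map_smul, map_smul, smul_eq_mul, smul_eq_mul]
              field_simp
              ring
            rw [this]
      · exact (convex_convexHull ℝ (F : Set E)).inter
          (convex_halfSpace_ge (LinearMap.isLinear ℓ) 0)



lemma iterate_cuts (Q : E → Prop)
    (hQ : ∀ (x y : E) (t : ℚ), Q x → Q y → Q ((t : ℝ) • x + (1 - (t : ℝ)) • y)) :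
    ∀ ls : List (E →ₗ[ℝ] ℝ), (∀ x, Q x → ∀ ℓ ∈ ls, ∃ q : ℚ, ℓ x = q) →
    ∀ F : Finset E, (∀ f ∈ F, Q f) →
    ∃ G : Finset E, (∀ g ∈ G, Q g) ∧
      {x | x ∈ convexHull ℝ (F : Set E) ∧ ∀ ℓ ∈ ls, 0 ≤ ℓ x} = convexHull ℝ (G : Set E) := by
  intro ls
  induction ls with
  | nil =>
    intro _ F hF
    refine ⟨F, hF, ?_⟩
    ext x; simp
  | cons ℓ ls ih =>
    intro hrat F hF
    obtain ⟨G₁, hG₁Q, hG₁⟩ := halfspace_cut Q hQ F hF ℓ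
      (fun f hf => hrat f (hF f hf) ℓ List.mem_cons_self)
    obtain ⟨G, hGQ, hG⟩ := ih (fun x hx ℓ' hℓ' => hrat x hx ℓ' (List.mem_cons_of_mem ℓ hℓ'))
      G₁ hG₁Q
    refine ⟨G, hGQ, ?_⟩
    rw [← hG]
    ext x
    simp only [Set.mem_setOf_eq, List.mem_cons, forall_eq_or_imp]
    constructor
    · rintro ⟨hx, h1, h2⟩
      have : x ∈ convexHull ℝ (G₁ : Set E) := by rw [← hG₁]; exact ⟨hx, h1⟩
      exact ⟨this, h2⟩
    · rintro ⟨hx, h2⟩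
      have : x ∈ {y | y ∈ convexHull ℝ (F : Set E) ∧ 0 ≤ ℓ y} := by rw [hG₁]; exact hx
      exact ⟨this.1, this.2, h2⟩


/-- Given rational points `B₁, …, B_r ∈ ℝ^N` with convex hull `L`, a positive
integer `m`, a real `c > 0`, and a set `T` of linear functionals with `ℓ (B j) ∈ (1/m)ℤ`
and `ℓ (B j) ≥ -c` for all `ℓ ∈ T` and all `j`, the set
`N_T = {Δ ∈ L | ℓ Δ ≥ 0 for all ℓ ∈ T}` is a rational polytope, i.e. the convex hull of
finitely many points with rational coordinates. -/
theorem stmt_3 (N r : ℕ) (hN : 0 < N) (hr : 0 < r)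
    (B : Fin r → EuclideanSpace ℝ (Fin N))
    (hB : ∀ j i, ∃ q : ℚ, B j i = (q : ℝ))
    (m : ℕ) (hm : 0 < m) (c : ℝ) (hc : 0 < c)
    (T : Set (EuclideanSpace ℝ (Fin N) →ₗ[ℝ] ℝ))
    (hT : ∀ ℓ ∈ T, ∀ j, (∃ n : ℤ, ℓ (B j) = (n : ℝ) / m) ∧ -c ≤ ℓ (B j)) :
    ∃ s : Finset (EuclideanSpace ℝ (Fin N)),
      (∀ v ∈ s, ∀ i, ∃ q : ℚ, v i = (q : ℝ)) ∧
      {Δ ∈ convexHull ℝ (Set.range B) | ∀ ℓ ∈ T, 0 ≤ ℓ Δ}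
        = convexHull ℝ (s : Set (EuclideanSpace ℝ (Fin N))) := by
  classical
  -- choose integer vectors for each functional in T
  have hchoice : ∀ ℓ : {ℓ : EuclideanSpace ℝ (Fin N) →ₗ[ℝ] ℝ // ℓ ∈ T}, ∃ n : Fin r → ℤ,
      ∀ j, (ℓ : EuclideanSpace ℝ (Fin N) →ₗ[ℝ] ℝ) (B j) = (n j : ℝ) / m := by
    intro ℓ
    choose n hn using fun j => (hT ℓ.1 ℓ.2 j).1
    exact ⟨n, hn⟩
  choose nv hnv using hchoice
  set C : ℤ := ⌈c * m⌉ with hC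
  have hmR : (0:ℝ) < (m:ℝ) := by exact_mod_cast hm
  have hlow : ∀ ℓ : {ℓ : EuclideanSpace ℝ (Fin N) →ₗ[ℝ] ℝ // ℓ ∈ T}, ∀ j, (0:ℤ) ≤ nv ℓ j + C := by
    intro ℓ j
    have h1 : -c ≤ (nv ℓ j : ℝ) / m := by rw [← hnv ℓ j]; exact (hT ℓ.1 ℓ.2 j).2
    have h2 : -(c * m) ≤ (nv ℓ j : ℝ) := by
      have h' := mul_le_mul_of_nonneg_right h1 (le_of_lt hmR)
      rw [div_mul_cancel₀ _ (ne_of_gt hmR)] at h'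
      linarith
    have h3 : (0:ℝ) ≤ (nv ℓ j : ℝ) + (C : ℝ) := by
      have : c * m ≤ (C : ℝ) := by rw [hC]; exact_mod_cast Int.le_ceil (c * m)
      linarith
    exact_mod_cast h3
  set ψ : {ℓ : EuclideanSpace ℝ (Fin N) →ₗ[ℝ] ℝ // ℓ ∈ T} → (Fin r → ℕ) := fun ℓ j => (nv ℓ j + C).toNat with hψ
  obtain ⟨F₀, hF₀S, hbasis⟩ := exists_finite_basis (Set.range ψ)
    ((Set.IsPWO.pi (s := fun _ : Fin r => (Set.univ : Set ℕ))
      (fun _ => Set.isPWO_of_wellQuasiOrderedLE _)).mono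
      (fun _ _ => Set.mem_univ_pi.2 fun _ => Set.mem_univ _))
  have hrep : ∀ u ∈ F₀, ∃ ℓ : {ℓ : EuclideanSpace ℝ (Fin N) →ₗ[ℝ] ℝ // ℓ ∈ T}, ψ ℓ = u := fun u hu => hF₀S hu
  choose rep hrepψ using hrep
  set ls : List (EuclideanSpace ℝ (Fin N) →ₗ[ℝ] ℝ) := F₀.attach.toList.map (fun u => (rep u.1 u.2 : {ℓ // ℓ ∈ T}).1)
    with hls
  have hls_mem : ∀ ℓ' ∈ ls, ∃ (u : _) (hu : u ∈ F₀), ℓ' = (rep u hu).1 := by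
    intro ℓ' h
    rw [hls, List.mem_map] at h
    obtain ⟨u, _, rfl⟩ := h
    exact ⟨u.1, u.2, rfl⟩
  have hlsT : ∀ ℓ' ∈ ls, ℓ' ∈ T := by
    intro ℓ' h
    obtain ⟨u, hu, rfl⟩ := hls_mem ℓ' h
    exact (rep u hu).2
  -- comparison of functionals from ψ-order
  have hcompare : ∀ (ℓ₁ ℓ₂ : {ℓ : EuclideanSpace ℝ (Fin N) →ₗ[ℝ] ℝ // ℓ ∈ T}), ψ ℓ₁ ≤ ψ ℓ₂ →
      ∀ j, ℓ₁.1 (B j) ≤ ℓ₂.1 (B j) := by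
    intro ℓ₁ ℓ₂ hle j
    have h1 : nv ℓ₁ j + C ≤ nv ℓ₂ j + C := by
      have := hle j
      rw [hψ] at this
      have e1 : nv ℓ₁ j + C = ((nv ℓ₁ j + C).toNat : ℤ) := (Int.toNat_of_nonneg (hlow ℓ₁ j)).symm
      have e2 : nv ℓ₂ j + C = ((nv ℓ₂ j + C).toNat : ℤ) := (Int.toNat_of_nonneg (hlow ℓ₂ j)).symm
      rw [e1, e2]
      exact_mod_cast this
    have h2 : nv ℓ₁ j ≤ nv ℓ₂ j := by omega
    rw [hnv ℓ₁ j, hnv ℓ₂ j]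
    have h3 : (nv ℓ₁ j : ℝ) ≤ (nv ℓ₂ j : ℝ) := by exact_mod_cast h2
    exact (div_le_div_iff_of_pos_right hmR).mpr h3
  -- the finite generating set of L
  set FB : Finset (EuclideanSpace ℝ (Fin N)) := Finset.image B Finset.univ with hFB
  set Q : EuclideanSpace ℝ (Fin N) → Prop := fun x =>
    (∀ i, ∃ q : ℚ, x i = (q:ℝ)) ∧ ∀ ℓ' ∈ ls, ∃ q : ℚ, ℓ' x = (q:ℝ) with hQdef
  have hQ : ∀ (x y : EuclideanSpace ℝ (Fin N)) (t : ℚ), Q x → Q y →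
      Q ((t:ℝ) • x + (1-(t:ℝ)) • y) := by
    intro x y t hx hy
    constructor
    · intro i
      obtain ⟨q₁, h₁⟩ := hx.1 i
      obtain ⟨q₂, h₂⟩ := hy.1 i
      refine ⟨t * q₁ + (1-t) * q₂, ?_⟩
      have e : ((t:ℝ) • x + (1-(t:ℝ)) • y) i = (t:ℝ) * x i + (1-(t:ℝ)) * y i := rfl
      rw [e, h₁, h₂]; push_cast; ring
    · intro ℓ' hℓ'
      obtain ⟨q₁, h₁⟩ := hx.2 ℓ' hℓ'
      obtain ⟨q₂, h₂⟩ := hy.2 ℓ' hℓ'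
      refine ⟨t * q₁ + (1-t) * q₂, ?_⟩
      rw [map_add, map_smul, map_smul, smul_eq_mul, smul_eq_mul, h₁, h₂]; push_cast; ring
  have hQF : ∀ f ∈ FB, Q f := by
    intro f hf
    rw [hFB, Finset.mem_image] at hf
    obtain ⟨j, _, rfl⟩ := hf
    constructor
    · exact fun i => hB j i
    · intro ℓ' hℓ'
      obtain ⟨u, hu, rfl⟩ := hls_mem ℓ' hℓ'
      refine ⟨(nv (rep u hu) j : ℚ) / (m:ℚ), ?_⟩
      rw [hnv (rep u hu) j]; push_cast; ring
  obtain ⟨G, hGQ, hGeq⟩ := iterate_cuts Q hQ ls (fun x hx => hx.2) FB hQF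
  refine ⟨G, fun v hv => (hGQ v hv).1, ?_⟩
  rw [← hGeq]
  have hconvFB : convexHull ℝ (Set.range B) = convexHull ℝ (FB : Set (EuclideanSpace ℝ (Fin N))) := by
    rw [hFB]; congr 1; rw [Finset.coe_image, Finset.coe_univ, Set.image_univ]
  ext Δ
  simp only [Set.mem_setOf_eq]
  rw [hconvFB]
  constructor
  · rintro ⟨hΔ, hall⟩
    exact ⟨hΔ, fun ℓ' hℓ' => hall ℓ' (hlsT ℓ' hℓ')⟩
  · rintro ⟨hΔ, hall⟩
    refine ⟨hΔ, ?_⟩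
    intro ℓ hℓT
    obtain ⟨u, hu, hule⟩ := hbasis (ψ ⟨ℓ, hℓT⟩) (Set.mem_range_self _)
    set ℓ' := rep u hu with hℓ'def
    have hcomp := hcompare ℓ' ⟨ℓ, hℓT⟩ (by rw [hrepψ u hu]; exact hule)
    have hℓ'ls : ℓ'.1 ∈ ls := by
      rw [hls, List.mem_map]
      refine ⟨⟨u, hu⟩, ?_, rfl⟩
      rw [Finset.mem_toList]
      exact Finset.mem_attach _ _
    obtain ⟨w, hw0, hw1, hwΔ⟩ := Finset.mem_convexHull'.1 hΔ
    have hptwise : ∀ y ∈ FB, ℓ'.1 y ≤ ℓ y := by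
      intro y hy
      rw [hFB, Finset.mem_image] at hy
      obtain ⟨j, _, rfl⟩ := hy
      exact hcomp j
    have e1 : ℓ Δ = ∑ y ∈ FB, w y * ℓ y := by
      rw [← hwΔ, map_sum]; simp only [map_smul, smul_eq_mul]
    have e2 : ℓ'.1 Δ = ∑ y ∈ FB, w y * ℓ'.1 y := by
      rw [← hwΔ, map_sum]; simp only [map_smul, smul_eq_mul]
    have hsumle : ∑ y ∈ FB, w y * ℓ'.1 y ≤ ∑ y ∈ FB, w y * ℓ y :=
      Finset.sum_le_sum fun y hy => mul_le_mul_of_nonneg_left (hptwise y hy) (hw0 y hy)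
    have h0 : 0 ≤ ℓ'.1 Δ := hall ℓ'.1 hℓ'ls
    rw [e2] at h0
    rw [e1]
    linarith
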